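/- arXiv:1411.7564 — 4 statements merged into one kernel-verified Lean document; each statement's English description precedes it below -/
import Mathlib

section
/- Let n ≥ 1, let A be a symmetric real n×n matrix, and let P be a subset of the space of real n×n matrices. Define p(X) = ⟨A, X⟩ and p_γ(X) = ⟨A, X⟩ + (1/(2γ))‖X‖²_F for γ > 0. If 0 < γ₁ < γ₂, X₁ is a minimizer of p_{γ₁} over P, and X₂ is a minimizer of p_{γ₂} over P, then p(X₁) ≥ p(X₂). (Proposition 1(ii)) -/
open Matrix

/-- Frobenius (trace) inner product of two real `n × n` matrices. -/
noncomputable def frobInner {n : ℕ} (A B : Matrix (Fin n) (Fin n) ℝ) : ℝ :=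
  (Aᵀ * B).trace

/-- Squared Frobenius norm of a real `n × n` matrix. -/
noncomputable def frobNormSq {n : ℕ} (X : Matrix (Fin n) (Fin n) ℝ) : ℝ :=
  (Xᵀ * X).trace

/-- Proposition 1(ii): for `0 < γ₁ < γ₂`, minimizers `X₁` of `p_{γ₁}` and `X₂` of
`p_{γ₂}` over `P` satisfy `p(X₁) ≥ p(X₂)`. -/
theorem stmt_1 (n : ℕ) (hn : 1 ≤ n) (A : Matrix (Fin n) (Fin n) ℝ) (hA : A.IsSymm)
    (P : Set (Matrix (Fin n) (Fin n) ℝ)) (γ₁ γ₂ : ℝ) (hγ₁ : 0 < γ₁) (hγ₁₂ : γ₁ < γ₂)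
    (X₁ X₂ : Matrix (Fin n) (Fin n) ℝ) (hX₁ : X₁ ∈ P) (hX₂ : X₂ ∈ P)
    (hmin₁ : ∀ Y ∈ P, frobInner A X₁ + (1 / (2 * γ₁)) * frobNormSq X₁ ≤
        frobInner A Y + (1 / (2 * γ₁)) * frobNormSq Y)
    (hmin₂ : ∀ Y ∈ P, frobInner A X₂ + (1 / (2 * γ₂)) * frobNormSq X₂ ≤
        frobInner A Y + (1 / (2 * γ₂)) * frobNormSq Y) :
    frobInner A X₂ ≤ frobInner A X₁ := by
  have h1 := hmin₁ X₂ hX₂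
  have h2 := hmin₂ X₁ hX₁
  have hγ₂ : 0 < γ₂ := hγ₁.trans hγ₁₂
  have hab : 1 / (2 * γ₂) < 1 / (2 * γ₁) := by
    apply one_div_lt_one_div_of_lt <;> linarith
  have hnorm : frobNormSq X₁ ≤ frobNormSq X₂ := by
    by_contra h
    push_neg at h
    nlinarith [mul_lt_mul_of_pos_left hab (sub_pos.mpr h)]
  nlinarith [mul_le_mul_of_nonneg_left hnorm (le_of_lt (by positivity : (0:ℝ) < 1 / (2 * γ₂)))]
end

section
/- Let C be a symmetric real n×n matrix, and let Π denote the metric projection onto the cone of positive semidefinite matrices (in Frobenius norm). Then the minimum of ‖Z + C‖²_F over all positive semidefinite matrices Z equals ‖Π(C)‖²_F, and it is attained at Z = Π(−C); that is, Π(−C) + C = Π(C) and ‖Z + C‖²_F ≥ ‖Π(C)‖²_F for every positive semidefinite Z. -/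
open Matrix

/-- Frobenius norm of a real `n × n` matrix. -/
noncomputable def frobNorm {n : ℕ} (X : Matrix (Fin n) (Fin n) ℝ) : ℝ :=
  Real.sqrt (frobNormSq X)

/-- `proj` is the metric projection onto the PSD cone: for every symmetric `X`,
`proj X` is PSD and is nearest to `X` in Frobenius norm among all PSD matrices. -/
def IsPSDProjection {n : ℕ}
    (proj : Matrix (Fin n) (Fin n) ℝ → Matrix (Fin n) (Fin n) ℝ) : Prop :=
  ∀ X : Matrix (Fin n) (Fin n) ℝ, X.IsSymm →
    (proj X).PosSemidef ∧
      ∀ Y : Matrix (Fin n) (Fin n) ℝ, Y.PosSemidef →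
        frobNorm (proj X - X) ≤ frobNorm (Y - X)

namespace Stmt5Aux

variable {n : ℕ}

/-- Frobenius (trace) inner product. -/
noncomputable def ip (X Y : Matrix (Fin n) (Fin n) ℝ) : ℝ := (Xᵀ * Y).trace

lemma ip_eq_sum (X Y : Matrix (Fin n) (Fin n) ℝ) :
    ip X Y = ∑ i, ∑ j, X j i * Y j i := by
  simp [ip, Matrix.trace, Matrix.mul_apply, Matrix.diag]

lemma ip_comm (X Y : Matrix (Fin n) (Fin n) ℝ) : ip X Y = ip Y X := by
  rw [ip_eq_sum, ip_eq_sum]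
  exact Finset.sum_congr rfl fun i _ => Finset.sum_congr rfl fun j _ => mul_comm _ _

lemma fsq_eq (X : Matrix (Fin n) (Fin n) ℝ) : frobNormSq X = ip X X := rfl

lemma fsq_nonneg (X : Matrix (Fin n) (Fin n) ℝ) : 0 ≤ frobNormSq X := by
  rw [fsq_eq, ip_eq_sum]
  exact Finset.sum_nonneg fun i _ => Finset.sum_nonneg fun j _ => mul_self_nonneg _

lemma fsq_eq_zero {X : Matrix (Fin n) (Fin n) ℝ} (h : frobNormSq X ≤ 0) : X = 0 := by
  have h' : frobNormSq X = 0 := le_antisymm h (fsq_nonneg X)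
  rw [fsq_eq, ip_eq_sum] at h'
  ext i j
  have hsum := (Finset.sum_eq_zero_iff_of_nonneg
    (fun k _ => Finset.sum_nonneg fun l _ => mul_self_nonneg (X l k))).mp h'
  have hrow := hsum j (Finset.mem_univ j)
  have hentry := (Finset.sum_eq_zero_iff_of_nonneg
    (fun l _ => mul_self_nonneg (X l j))).mp hrow i (Finset.mem_univ i)
  have := mul_self_eq_zero.mp hentry
  simpa using this

lemma ip_sub_left (X Y Z : Matrix (Fin n) (Fin n) ℝ) :
    ip (X - Y) Z = ip X Z - ip Y Z := by
  simp only [ip_eq_sum, Matrix.sub_apply, sub_mul, Finset.sum_sub_distrib]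

lemma ip_sub_right (X Y Z : Matrix (Fin n) (Fin n) ℝ) :
    ip X (Y - Z) = ip X Y - ip X Z := by
  simp only [ip_eq_sum, Matrix.sub_apply, mul_sub, Finset.sum_sub_distrib]

lemma ip_smul_right (t : ℝ) (X Y : Matrix (Fin n) (Fin n) ℝ) :
    ip X (t • Y) = t * ip X Y := by
  simp only [ip_eq_sum, Matrix.smul_apply, smul_eq_mul, Finset.mul_sum]
  exact Finset.sum_congr rfl fun i _ => Finset.sum_congr rfl fun j _ => by ring

lemma fsq_smul (t : ℝ) (X : Matrix (Fin n) (Fin n) ℝ) :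
    frobNormSq (t • X) = t ^ 2 * frobNormSq X := by
  simp only [fsq_eq, ip_eq_sum, Matrix.smul_apply, smul_eq_mul, Finset.mul_sum]
  exact Finset.sum_congr rfl fun i _ => Finset.sum_congr rfl fun j _ => by ring

lemma fsq_add (A B : Matrix (Fin n) (Fin n) ℝ) :
    frobNormSq (A + B) = frobNormSq A + 2 * ip A B + frobNormSq B := by
  have h : ∀ i j : Fin n, (A + B) j i * (A + B) j i =
      A j i * A j i + 2 * (A j i * B j i) + B j i * B j i := by
    intro i j; simp only [Matrix.add_apply]; ring
  simp only [fsq_eq, ip_eq_sum, h, Finset.sum_add_distrib, Finset.mul_sum]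

lemma psd_smul {t : ℝ} (ht : 0 ≤ t) {A : Matrix (Fin n) (Fin n) ℝ}
    (hA : A.PosSemidef) : (t • A).PosSemidef := by
  refine Matrix.PosSemidef.of_dotProduct_mulVec_nonneg ?_ ?_
  · show (t • A)ᴴ = t • A
    rw [Matrix.conjTranspose_smul, star_trivial, hA.1.eq]
  · intro x
    rw [Matrix.smul_mulVec, dotProduct_smul, smul_eq_mul]
    exact mul_nonneg ht (hA.dotProduct_mulVec_nonneg x)

lemma psd_outer (x : Fin n → ℝ) : (Matrix.vecMulVec x x).PosSemidef := by
  refine Matrix.PosSemidef.of_dotProduct_mulVec_nonneg ?_ ?_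
  · show (Matrix.vecMulVec x x)ᴴ = Matrix.vecMulVec x x
    ext i j
    simp [Matrix.vecMulVec_apply, Matrix.conjTranspose_apply, mul_comm]
  · intro v
    have h : star v ⬝ᵥ (Matrix.vecMulVec x x) *ᵥ v = (x ⬝ᵥ v) * (x ⬝ᵥ v) := by
      simp only [dotProduct, Matrix.mulVec, Matrix.vecMulVec_apply, star_trivial,
        Finset.sum_mul, Finset.mul_sum]
      rw [Finset.sum_comm]
      exact Finset.sum_congr rfl fun i _ => Finset.sum_congr rfl fun j _ => by
        ring
    rw [h]
    exact mul_self_nonneg _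

lemma ip_outer (M : Matrix (Fin n) (Fin n) ℝ) (x : Fin n → ℝ) :
    ip M (Matrix.vecMulVec x x) = x ⬝ᵥ M *ᵥ x := by
  simp only [ip_eq_sum, Matrix.vecMulVec_apply, dotProduct, Matrix.mulVec,
    Finset.mul_sum]
  rw [Finset.sum_comm]
  exact Finset.sum_congr rfl fun i _ => Finset.sum_congr rfl fun j _ => by ring

lemma trace_nonneg_of_psd {A : Matrix (Fin n) (Fin n) ℝ} (hA : A.PosSemidef) :
    0 ≤ A.trace := by
  rw [Matrix.trace]
  refine Finset.sum_nonneg fun i _ => ?_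
  have h := hA.dotProduct_mulVec_nonneg (Pi.single i 1)
  simpa [dotProduct, Matrix.mulVec, Pi.single_apply, Finset.mul_sum] using h

lemma ip_psd_psd_nonneg {A B : Matrix (Fin n) (Fin n) ℝ}
    (hA : A.PosSemidef) (hB : B.PosSemidef) : 0 ≤ ip A B := by
  open scoped MatrixOrder Matrix.Norms.L2Operator in
  obtain ⟨M, hM⟩ := CStarAlgebra.nonneg_iff_eq_star_mul_self.mp hB.nonneg
  rw [Matrix.star_eq_conjTranspose] at hM
  have hAt : Aᵀ = A := by
    rw [← Matrix.conjTranspose_eq_transpose_of_trivial, hA.1.eq]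
  have htr : ip A B = (M * A * Mᴴ).trace := by
    rw [ip, hAt, hM]
    rw [show Mᴴ * M = Mᴴ * M from rfl, ← Matrix.mul_assoc,
      Matrix.trace_mul_comm (A * Mᴴ) M, Matrix.mul_assoc, ← Matrix.mul_assoc]
  rw [htr]
  exact trace_nonneg_of_psd (hA.mul_mul_conjTranspose_same M)

lemma norm_le_imp_sq_le {A B : Matrix (Fin n) (Fin n) ℝ}
    (h : frobNorm A ≤ frobNorm B) : frobNormSq A ≤ frobNormSq B := by
  have h2 : Real.sqrt (frobNormSq A) ^ 2 ≤ Real.sqrt (frobNormSq B) ^ 2 :=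
    pow_le_pow_left₀ (Real.sqrt_nonneg _) h 2
  rwa [Real.sq_sqrt (fsq_nonneg _), Real.sq_sqrt (fsq_nonneg _)] at h2

/-- First-order optimality conditions for the projection. -/
lemma opt {X P : Matrix (Fin n) (Fin n) ℝ} (hP : P.PosSemidef)
    (hmin : ∀ Y : Matrix (Fin n) (Fin n) ℝ, Y.PosSemidef →
      frobNorm (P - X) ≤ frobNorm (Y - X)) :
    ip (P - X) P = 0 ∧
      ∀ Y : Matrix (Fin n) (Fin n) ℝ, Y.PosSemidef → 0 ≤ ip (P - X) Y := by
  have hsq : ∀ Y : Matrix (Fin n) (Fin n) ℝ, Y.PosSemidef →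
      frobNormSq (P - X) ≤ frobNormSq (Y - X) := fun Y hY =>
    norm_le_imp_sq_le (hmin Y hY)
  have key : ∀ Y : Matrix (Fin n) (Fin n) ℝ, Y.PosSemidef →
      0 ≤ ip (P - X) (Y - P) := by
    intro Y hY
    set a := ip (P - X) (Y - P) with ha
    set b := frobNormSq (Y - P) with hbdef
    have hb : 0 ≤ b := fsq_nonneg _
    have ht : ∀ t : ℝ, 0 < t → t ≤ 1 → 0 ≤ 2 * t * a + t ^ 2 * b := by
      intro t ht0 ht1
      have hW : (P + t • (Y - P)).PosSemidef := by
        have hrepr : P + t • (Y - P) = (1 - t) • P + t • Y := by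
          ext i j
          simp only [Matrix.add_apply, Matrix.smul_apply, Matrix.sub_apply,
            smul_eq_mul]
          ring
        rw [hrepr]
        exact (psd_smul (by linarith) hP).add (psd_smul ht0.le hY)
      have hle := hsq _ hW
      have h1 : P + t • (Y - P) - X = (P - X) + t • (Y - P) := by
        ext i j
        simp only [Matrix.add_apply, Matrix.smul_apply, Matrix.sub_apply,
          smul_eq_mul]
        ring
      rw [h1, fsq_add, ip_smul_right, fsq_smul] at hle
      have := hle
      nlinarith [this]
    by_contra hneg
    push_neg at hneg
    rcases eq_or_lt_of_le hb with hb0 | hb0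
    · have h1 := ht 1 one_pos le_rfl
      nlinarith
    · have hab : 0 < -a / b := div_pos (neg_pos.mpr hneg) hb0
      set t := min 1 (-a / b) with htdef
      have htpos : 0 < t := lt_min one_pos hab
      have ht1 : t ≤ 1 := min_le_left _ _
      have h2 : t ≤ -a / b := min_le_right _ _
      have hmain := ht t htpos ht1
      have htb : t * b ≤ -a := (le_div_iff₀ hb0).mp h2
      nlinarith [mul_le_mul_of_nonneg_left htb htpos.le,
        mul_pos htpos (neg_pos.mpr hneg)]
  have hz : ip (P - X) P = 0 := by
    have h0 := key 0 Matrix.PosSemidef.zero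
    have h2 := key ((2 : ℝ) • P) (psd_smul (by norm_num) hP)
    rw [ip_sub_right] at h0 h2
    rw [ip_smul_right] at h2
    have hipz : ip (P - X) (0 : Matrix (Fin n) (Fin n) ℝ) = 0 := by
      simp [ip_eq_sum]
    rw [hipz] at h0
    linarith
  refine ⟨hz, fun Y hY => ?_⟩
  have := key Y hY
  rw [ip_sub_right] at this
  linarith

end Stmt5Aux

/-- The minimum of `‖Z + C‖²_F` over PSD matrices `Z` equals `‖Π(C)‖²_F` and is
attained at `Z = Π(−C)`: that is, `Π(−C) + C = Π(C)` and `‖Z + C‖²_F ≥ ‖Π(C)‖²_F`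
for every PSD `Z`. -/
theorem stmt_5 (n : ℕ)
    (proj : Matrix (Fin n) (Fin n) ℝ → Matrix (Fin n) (Fin n) ℝ)
    (hproj : IsPSDProjection proj)
    (C : Matrix (Fin n) (Fin n) ℝ) (hC : C.IsSymm) :
    proj (-C) + C = proj C ∧
      ∀ Z : Matrix (Fin n) (Fin n) ℝ, Z.PosSemidef →
        frobNormSq (proj C) ≤ frobNormSq (Z + C) := by
  open Stmt5Aux in
  obtain ⟨hPpsd, hPmin⟩ := hproj C hC
  have hC' : (-C).IsSymm := by
    rw [Matrix.IsSymm] at hC ⊢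
    rw [Matrix.transpose_neg, hC]
  obtain ⟨hQpsd, hQmin⟩ := hproj (-C) hC'
  set P := proj C with hPdef
  set Q := proj (-C) with hQdef
  obtain ⟨hPz, hPd⟩ := Stmt5Aux.opt hPpsd hPmin
  obtain ⟨hQz, hQd⟩ := Stmt5Aux.opt hQpsd hQmin
  have hsub : Q - -C = Q + C := sub_neg_eq_add Q C
  rw [hsub] at hQz hQd
  -- R = P - C is PSD
  have hRpsd : (P - C).PosSemidef := by
    refine Matrix.PosSemidef.of_dotProduct_mulVec_nonneg ?_ ?_
    · show (P - C)ᴴ = P - C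
      have hCh : Cᴴ = C := by
        rw [Matrix.conjTranspose_eq_transpose_of_trivial, hC]
      rw [Matrix.conjTranspose_sub, hPpsd.1.eq, hCh]
    · intro x
      have h := hPd _ (Stmt5Aux.psd_outer x)
      rw [Stmt5Aux.ip_outer] at h
      simpa [star_trivial] using h
  -- Q = P - C
  have hQR : Q = P - C := by
    have hdiff : Q - (P - C) = (Q + C) - P := by abel
    have hexp : frobNormSq (Q - (P - C)) =
        (Stmt5Aux.ip (Q + C) Q - Stmt5Aux.ip (Q + C) (P - C)) -
          (Stmt5Aux.ip P Q - Stmt5Aux.ip (P - C) P) := by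
      rw [Stmt5Aux.fsq_eq]
      have h1 : Q - (P - C) = (Q + C) - P := hdiff
      calc Stmt5Aux.ip (Q - (P - C)) (Q - (P - C))
          = Stmt5Aux.ip ((Q + C) - P) (Q - (P - C)) := by rw [← h1]
        _ = Stmt5Aux.ip (Q + C) (Q - (P - C)) - Stmt5Aux.ip P (Q - (P - C)) :=
            Stmt5Aux.ip_sub_left _ _ _
        _ = (Stmt5Aux.ip (Q + C) Q - Stmt5Aux.ip (Q + C) (P - C)) -
              (Stmt5Aux.ip P Q - Stmt5Aux.ip P (P - C)) := by
            rw [Stmt5Aux.ip_sub_right (Q + C) Q (P - C), Stmt5Aux.ip_sub_right P Q (P - C)]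
        _ = (Stmt5Aux.ip (Q + C) Q - Stmt5Aux.ip (Q + C) (P - C)) -
              (Stmt5Aux.ip P Q - Stmt5Aux.ip (P - C) P) := by
            rw [Stmt5Aux.ip_comm P (P - C)]
    have h1 : Stmt5Aux.ip (Q + C) Q = 0 := hQz
    have h2 : 0 ≤ Stmt5Aux.ip (Q + C) (P - C) := hQd _ hRpsd
    have h3 : 0 ≤ Stmt5Aux.ip P Q := Stmt5Aux.ip_psd_psd_nonneg hPpsd hQpsd
    have h4 : Stmt5Aux.ip (P - C) P = 0 := hPz
    have hle : frobNormSq (Q - (P - C)) ≤ 0 := by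
      rw [hexp, h1, h4]; linarith
    have := Stmt5Aux.fsq_eq_zero hle
    exact sub_eq_zero.mp this
  have hmoreau : Q + C = P := by rw [hQR]; abel
  refine ⟨hmoreau, fun Z hZ => ?_⟩
  have h := hQmin Z hZ
  have hsq := Stmt5Aux.norm_le_imp_sq_le h
  rw [hsub, sub_neg_eq_add, hmoreau] at hsq
  exact hsq
end

section
/- On the real inner product space of symmetric n×n real matrices equipped with the Frobenius inner product, the function ζ(X) = (1/2)‖Π(X)‖²_F, where Π(X) is the metric projection of X onto the cone of positive semidefinite matrices, is Fréchet differentiable at every symmetric matrix X, with derivative the linear functional H ↦ ⟨Π(X), H⟩. (The gradient of ζ at X is Π(X).) -/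
open Matrix

-- Equip the matrix space with the Frobenius norm.
attribute [local instance] Matrix.frobeniusNormedAddCommGroup Matrix.frobeniusNormedSpace

namespace StmtSixAux

variable {n : ℕ}

lemma ip_eq_sum (A B : Matrix (Fin n) (Fin n) ℝ) :
    frobInner A B = ∑ i, ∑ j, A i j * B i j := by
  rw [frobInner, Matrix.trace]
  simp only [Matrix.diag_apply, Matrix.mul_apply, Matrix.transpose_apply]
  exact Finset.sum_comm

lemma ip_comm (A B : Matrix (Fin n) (Fin n) ℝ) : frobInner A B = frobInner B A := by
  simp [ip_eq_sum, mul_comm]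

lemma ip_add_left (A B C : Matrix (Fin n) (Fin n) ℝ) :
    frobInner (A + B) C = frobInner A C + frobInner B C := by
  simp [ip_eq_sum, Matrix.add_apply, add_mul, Finset.sum_add_distrib]

lemma ip_sub_left (A B C : Matrix (Fin n) (Fin n) ℝ) :
    frobInner (A - B) C = frobInner A C - frobInner B C := by
  simp [ip_eq_sum, Matrix.sub_apply, sub_mul, Finset.sum_sub_distrib]

lemma ip_add_right (A B C : Matrix (Fin n) (Fin n) ℝ) :
    frobInner A (B + C) = frobInner A B + frobInner A C := by
  simp [ip_eq_sum, Matrix.add_apply, mul_add, Finset.sum_add_distrib]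

lemma ip_sub_right (A B C : Matrix (Fin n) (Fin n) ℝ) :
    frobInner A (B - C) = frobInner A B - frobInner A C := by
  simp [ip_eq_sum, Matrix.sub_apply, mul_sub, Finset.sum_sub_distrib]

lemma ip_smul_left (r : ℝ) (A B : Matrix (Fin n) (Fin n) ℝ) :
    frobInner (r • A) B = r * frobInner A B := by
  simp [ip_eq_sum, Matrix.smul_apply, smul_eq_mul, Finset.mul_sum, mul_assoc]

lemma ip_smul_right (r : ℝ) (A B : Matrix (Fin n) (Fin n) ℝ) :
    frobInner A (r • B) = r * frobInner A B := by
  rw [ip_comm, ip_smul_left, ip_comm]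

lemma ip_neg_right (A B : Matrix (Fin n) (Fin n) ℝ) :
    frobInner A (-B) = -frobInner A B := by
  simp [ip_eq_sum, Finset.sum_neg_distrib]

lemma ip_self_nonneg (A : Matrix (Fin n) (Fin n) ℝ) : 0 ≤ frobInner A A := by
  rw [ip_eq_sum]
  exact Finset.sum_nonneg fun i _ => Finset.sum_nonneg fun j _ => mul_self_nonneg _

lemma frobNormSq_eq (A : Matrix (Fin n) (Fin n) ℝ) : frobNormSq A = frobInner A A := rfl

lemma norm_mul_self (A : Matrix (Fin n) (Fin n) ℝ) : ‖A‖ * ‖A‖ = frobInner A A := by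
  have h : ‖A‖ = Real.sqrt (∑ i, ∑ j, A i j * A i j) := by
    rw [Matrix.frobenius_norm_def, Real.sqrt_eq_rpow]
    congr 1
    refine Finset.sum_congr rfl fun i _ => Finset.sum_congr rfl fun j _ => ?_
    rw [show (2 : ℝ) = ((2 : ℕ) : ℝ) by norm_num, Real.rpow_natCast]
    rw [Real.norm_eq_abs, sq_abs, sq]
  rw [h, Real.mul_self_sqrt, ip_eq_sum]
  have := ip_self_nonneg A
  rwa [ip_eq_sum] at this

lemma psd_add {A B : Matrix (Fin n) (Fin n) ℝ} (hA : A.PosSemidef) (hB : B.PosSemidef) :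
    (A + B).PosSemidef := by
  refine Matrix.PosSemidef.of_dotProduct_mulVec_nonneg (hA.1.add hB.1) fun x => ?_
  rw [Matrix.add_mulVec, dotProduct_add]
  exact add_nonneg (hA.dotProduct_mulVec_nonneg x) (hB.dotProduct_mulVec_nonneg x)

lemma psd_smul {A : Matrix (Fin n) (Fin n) ℝ} (hA : A.PosSemidef) {c : ℝ} (hc : 0 ≤ c) :
    (c • A).PosSemidef := by
  refine Matrix.PosSemidef.of_dotProduct_mulVec_nonneg ?_ ?_
  · rw [Matrix.IsHermitian, Matrix.conjTranspose_smul, hA.1.eq, star_trivial]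
  · intro x
    rw [Matrix.smul_mulVec, dotProduct_smul, smul_eq_mul]
    exact mul_nonneg hc (hA.dotProduct_mulVec_nonneg x)

end StmtSixAux


namespace StmtSixAux

variable {n : ℕ}

/-- Squared-norm version of the minimality property. -/
lemma sqmin {proj : Matrix (Fin n) (Fin n) ℝ → Matrix (Fin n) (Fin n) ℝ}
    (hproj : IsPSDProjection proj) {A : Matrix (Fin n) (Fin n) ℝ} (hA : A.IsSymm)
    {Z : Matrix (Fin n) (Fin n) ℝ} (hZ : Z.PosSemidef) :
    frobNormSq (proj A - A) ≤ frobNormSq (Z - A) := by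
  have h := (hproj A hA).2 Z hZ
  have ha : 0 ≤ frobNormSq (proj A - A) := ip_self_nonneg _
  have hb : 0 ≤ frobNormSq (Z - A) := ip_self_nonneg _
  calc frobNormSq (proj A - A) = Real.sqrt (frobNormSq (proj A - A)) ^ 2 :=
        (Real.sq_sqrt ha).symm
    _ ≤ Real.sqrt (frobNormSq (Z - A)) ^ 2 := by
        exact pow_le_pow_left₀ (Real.sqrt_nonneg _) h 2
    _ = frobNormSq (Z - A) := Real.sq_sqrt hb

/-- Variational inequality for the projection. -/
lemma hVI {proj : Matrix (Fin n) (Fin n) ℝ → Matrix (Fin n) (Fin n) ℝ}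
    (hproj : IsPSDProjection proj) {A : Matrix (Fin n) (Fin n) ℝ} (hA : A.IsSymm)
    {Z : Matrix (Fin n) (Fin n) ℝ} (hZ : Z.PosSemidef) :
    frobInner (A - proj A) (Z - proj A) ≤ 0 := by
  have hP := (hproj A hA).1
  have hs0 : 0 ≤ frobInner (Z - proj A) (Z - proj A) := ip_self_nonneg _
  have key : ∀ t : ℝ, 0 < t → t ≤ 1 →
      0 ≤ 2 * frobInner (proj A - A) (Z - proj A)
        + t * frobInner (Z - proj A) (Z - proj A) := by
    intro t ht ht1
    have hW : ((1 - t) • proj A + t • Z).PosSemidef :=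
      psd_add (psd_smul hP (by linarith)) (psd_smul hZ (le_of_lt ht))
    have hle := sqmin hproj hA hW
    have hWeq : (1 - t) • proj A + t • Z - A = (proj A - A) + t • (Z - proj A) := by
      ext i j
      simp [Matrix.add_apply, Matrix.sub_apply, Matrix.smul_apply, smul_eq_mul]
      ring
    rw [hWeq] at hle
    have hcomm := ip_comm (Z - proj A) (proj A - A)
    have hexp : frobNormSq ((proj A - A) + t • (Z - proj A))
        = frobNormSq (proj A - A) + 2 * t * frobInner (proj A - A) (Z - proj A)
          + t ^ 2 * frobInner (Z - proj A) (Z - proj A) := by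
      simp only [frobNormSq_eq, ip_add_left, ip_add_right, ip_smul_left, ip_smul_right, hcomm]
      ring
    rw [hexp] at hle
    have h2 : 0 ≤ t * (2 * frobInner (proj A - A) (Z - proj A)
        + t * frobInner (Z - proj A) (Z - proj A)) := by nlinarith
    exact nonneg_of_mul_nonneg_right h2 ht
  have hge : 0 ≤ frobInner (proj A - A) (Z - proj A) := by
    by_contra hc
    push_neg at hc
    rcases eq_or_lt_of_le hs0 with hs | hs
    · have := key 1 one_pos le_rfl
      rw [← hs] at this
      linarith
    · set s := frobInner (Z - proj A) (Z - proj A)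
      set c := frobInner (proj A - A) (Z - proj A)
      have hts : (0 : ℝ) < -c / s := div_pos (by linarith) hs
      have h1 := key (min 1 (-c / s)) (lt_min one_pos hts) (min_le_left _ _)
      have h2 : min 1 (-c / s) * s ≤ (-c / s) * s :=
        mul_le_mul_of_nonneg_right (min_le_right _ _) (le_of_lt hs)
      rw [div_mul_cancel₀ _ (ne_of_gt hs)] at h2
      linarith
  have : frobInner (A - proj A) (Z - proj A)
      = -frobInner (proj A - A) (Z - proj A) := by
    simp only [ip_sub_left]; ring
  linarith [this ▸ neg_nonpos_of_nonneg hge, this]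

lemma horth {proj : Matrix (Fin n) (Fin n) ℝ → Matrix (Fin n) (Fin n) ℝ}
    (hproj : IsPSDProjection proj) {A : Matrix (Fin n) (Fin n) ℝ} (hA : A.IsSymm) :
    frobInner (A - proj A) (proj A) = 0 := by
  have hP := (hproj A hA).1
  have h0 := hVI hproj hA Matrix.PosSemidef.zero (Z := (0 : Matrix (Fin n) (Fin n) ℝ))
  have h2 := hVI hproj hA (psd_smul hP (by norm_num : (0:ℝ) ≤ 2))
    (Z := (2 : ℝ) • proj A)
  have e0 : frobInner (A - proj A) ((0 : Matrix (Fin n) (Fin n) ℝ) - proj A)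
      = -frobInner (A - proj A) (proj A) := by
    rw [zero_sub, ip_neg_right]
  have e2 : frobInner (A - proj A) ((2 : ℝ) • proj A - proj A)
      = frobInner (A - proj A) (proj A) := by
    simp only [ip_sub_right, ip_smul_right]; ring
  rw [e0] at h0
  rw [e2] at h2
  linarith

lemma hcone {proj : Matrix (Fin n) (Fin n) ℝ → Matrix (Fin n) (Fin n) ℝ}
    (hproj : IsPSDProjection proj) {A : Matrix (Fin n) (Fin n) ℝ} (hA : A.IsSymm)
    {Z : Matrix (Fin n) (Fin n) ℝ} (hZ : Z.PosSemidef) :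
    frobInner (A - proj A) Z ≤ 0 := by
  have h1 := hVI hproj hA hZ
  have h2 := horth hproj hA
  have e : frobInner (A - proj A) Z
      = frobInner (A - proj A) (Z - proj A) + frobInner (A - proj A) (proj A) := by
    simp only [ip_sub_right]; ring
  linarith [e ▸ add_nonpos h1 (le_of_eq h2)]

/-- Lower bound: the linearization underestimates the function. -/
lemma glower {proj : Matrix (Fin n) (Fin n) ℝ → Matrix (Fin n) (Fin n) ℝ}
    (hproj : IsPSDProjection proj) {A B : Matrix (Fin n) (Fin n) ℝ}
    (hA : A.IsSymm) (hB : B.IsSymm) :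
    0 ≤ (1/2) * frobInner (proj B) (proj B) - (1/2) * frobInner (proj A) (proj A)
      - frobInner (proj A) (B - A) := by
  have hPA := (hproj A hA).1
  have h1 : frobInner (B - proj B) (proj A) ≤ 0 := hcone hproj hB hPA
  have h2 : frobInner (A - proj A) (proj A) = 0 := horth hproj hA
  have h3 : 0 ≤ frobInner (proj B - proj A) (proj B - proj A) := ip_self_nonneg _
  have c1 := ip_comm (proj A) B
  have c2 := ip_comm (proj A) A
  have c3 := ip_comm (proj A) (proj B)
  simp only [ip_sub_left, ip_sub_right] at *
  linarith

end StmtSixAux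

/-- The function `ζ(X) = (1/2)‖Π(X)‖²_F` is Fréchet differentiable at every symmetric
matrix `X` (within the subspace of symmetric matrices), with derivative the linear
functional `H ↦ ⟨Π(X), H⟩`; i.e. the gradient of `ζ` at `X` is `Π(X)`. -/
theorem stmt_6 (n : ℕ)
    (proj : Matrix (Fin n) (Fin n) ℝ → Matrix (Fin n) (Fin n) ℝ)
    (hproj : IsPSDProjection proj)
    (X : Matrix (Fin n) (Fin n) ℝ) (hX : X.IsSymm) :
    ∃ L : Matrix (Fin n) (Fin n) ℝ →L[ℝ] ℝ,
      (∀ H : Matrix (Fin n) (Fin n) ℝ, L H = frobInner (proj X) H) ∧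
      HasFDerivWithinAt (fun Y => (1 / 2 : ℝ) * frobNormSq (proj Y)) L
        {Y : Matrix (Fin n) (Fin n) ℝ | Y.IsSymm} X := by
  classical
  open StmtSixAux in
  have hPX := (hproj X hX).1
  let L0 : Matrix (Fin n) (Fin n) ℝ →ₗ[ℝ] ℝ :=
    { toFun := fun H => frobInner (proj X) H
      map_add' := fun a b => StmtSixAux.ip_add_right _ a b
      map_smul' := fun r a => by simp [StmtSixAux.ip_smul_right] }
  refine ⟨LinearMap.toContinuousLinearMap L0, fun H => rfl, ?_⟩
  have key : ∀ Y : Matrix (Fin n) (Fin n) ℝ, Y.IsSymm →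
      0 ≤ (1/2) * frobNormSq (proj Y) - (1/2) * frobNormSq (proj X)
          - frobInner (proj X) (Y - X) ∧
      (1/2) * frobNormSq (proj Y) - (1/2) * frobNormSq (proj X)
          - frobInner (proj X) (Y - X) ≤ ‖Y - X‖ * ‖Y - X‖ := by
    intro Y hY
    have hPY := (hproj Y hY).1
    have hlow := StmtSixAux.glower hproj hX hY
    have hup := StmtSixAux.glower hproj hY hX
    -- monotonicity
    have m1 := StmtSixAux.hVI hproj hX hPY
    have m2 := StmtSixAux.hVI hproj hY hPX
    have h3 : 0 ≤ frobInner ((proj Y - proj X) - (Y - X)) ((proj Y - proj X) - (Y - X)) :=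
      StmtSixAux.ip_self_nonneg _
    have c1 := StmtSixAux.ip_comm X Y
    have c2 := StmtSixAux.ip_comm X (proj X)
    have c3 := StmtSixAux.ip_comm X (proj Y)
    have c4 := StmtSixAux.ip_comm Y (proj X)
    have c5 := StmtSixAux.ip_comm Y (proj Y)
    have c6 := StmtSixAux.ip_comm (proj X) (proj Y)
    have hns := StmtSixAux.norm_mul_self (Y - X)
    constructor
    · simpa only [StmtSixAux.frobNormSq_eq] using hlow
    · rw [hns]
      simp only [StmtSixAux.frobNormSq_eq, StmtSixAux.ip_sub_left,
        StmtSixAux.ip_sub_right] at *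
      linarith
  apply HasFDerivWithinAt.of_isLittleO
  rw [Asymptotics.isLittleO_iff]
  intro c hc
  filter_upwards [self_mem_nhdsWithin,
    mem_nhdsWithin_of_mem_nhds (Metric.ball_mem_nhds X hc)] with Y hYs hYb
  have hY : Y.IsSymm := hYs
  have hdist : ‖Y - X‖ < c := by
    rw [← dist_eq_norm]; exact Metric.mem_ball.mp hYb
  obtain ⟨hlo, hhi⟩ := key Y hY
  have hLval : (LinearMap.toContinuousLinearMap L0) (Y - X) = frobInner (proj X) (Y - X) := rfl
  change ‖_ - frobInner (proj X) (Y - X)‖ ≤ _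
  rw [Real.norm_eq_abs, abs_of_nonneg hlo]
  calc (1/2) * frobNormSq (proj Y) - (1/2) * frobNormSq (proj X)
        - frobInner (proj X) (Y - X) ≤ ‖Y - X‖ * ‖Y - X‖ := hhi
    _ ≤ c * ‖Y - X‖ := mul_le_mul_of_nonneg_right (le_of_lt hdist) (norm_nonneg _)
end

section
/- Weak duality for the regularized SDP: let A, B_1, …, B_m be symmetric real n×n matrices, b ∈ ℝ^m, γ > 0, and let {1,…,m} be partitioned into index sets I_eq and I_in. Suppose X is a positive semidefinite real n×n matrix satisfying ⟨B_i, X⟩ = b_i for all i ∈ I_eq and ⟨B_i, X⟩ ≤ b_i for all i ∈ I_in, and suppose u ∈ ℝ^m satisfies u_i ≥ 0 for all i ∈ I_in. Then d_γ(u) ≤ ⟨A, X⟩ + (1/(2γ))‖X‖²_F, where d_γ(u) = −uᵀb − (γ/2)‖Π(−A − Σ_{i=1}^m u_i B_i)‖²_F and Π denotes the metric projection onto the PSD cone. -/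
open Matrix

/-- `C(u) = −A − Σᵢ uᵢ Bᵢ`. -/
noncomputable def Cmat {n m : ℕ} (A : Matrix (Fin n) (Fin n) ℝ)
    (B : Fin m → Matrix (Fin n) (Fin n) ℝ) (u : Fin m → ℝ) :
    Matrix (Fin n) (Fin n) ℝ :=
  -A - ∑ i, u i • B i

/-- `d_γ(u) = −uᵀb − (γ/2)‖Π(C(u))‖²_F`. -/
noncomputable def dualObj {n m : ℕ} (A : Matrix (Fin n) (Fin n) ℝ)
    (B : Fin m → Matrix (Fin n) (Fin n) ℝ) (b : Fin m → ℝ) (γ : ℝ)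
    (proj : Matrix (Fin n) (Fin n) ℝ → Matrix (Fin n) (Fin n) ℝ)
    (u : Fin m → ℝ) : ℝ :=
  -(∑ i, u i * b i) - (γ / 2) * frobNormSq (proj (Cmat A B u))



lemma frob_expand {n : ℕ} (M N : Matrix (Fin n) (Fin n) ℝ) :
    frobInner M N = ∑ i, ∑ j, M j i * N j i := by
  simp [frobInner, Matrix.trace, Matrix.mul_apply, Matrix.diag]

lemma frobNormSq_eq {n : ℕ} (M : Matrix (Fin n) (Fin n) ℝ) :
    frobNormSq M = frobInner M M := rfl

lemma frobNormSq_nonneg {n : ℕ} (M : Matrix (Fin n) (Fin n) ℝ) :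
    0 ≤ frobNormSq M := by
  rw [frobNormSq_eq, frob_expand]
  exact Finset.sum_nonneg fun i _ => Finset.sum_nonneg fun j _ => mul_self_nonneg _

lemma frobNormSq_sub {n : ℕ} (Y C : Matrix (Fin n) (Fin n) ℝ) :
    frobNormSq (Y - C) = frobNormSq Y - 2 * frobInner C Y + frobNormSq C := by
  simp only [frobNormSq_eq, frob_expand, Matrix.sub_apply, Finset.mul_sum]
  rw [← Finset.sum_sub_distrib, ← Finset.sum_add_distrib]
  refine Finset.sum_congr rfl fun i _ => ?_
  rw [← Finset.sum_sub_distrib, ← Finset.sum_add_distrib]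
  exact Finset.sum_congr rfl fun j _ => by ring

lemma frobInner_smul_right {n : ℕ} (M N : Matrix (Fin n) (Fin n) ℝ) (c : ℝ) :
    frobInner M (c • N) = c * frobInner M N := by
  simp only [frob_expand, Matrix.smul_apply, smul_eq_mul, Finset.mul_sum]
  exact Finset.sum_congr rfl fun i _ => Finset.sum_congr rfl fun j _ => by ring

lemma frobNormSq_smul {n : ℕ} (M : Matrix (Fin n) (Fin n) ℝ) (c : ℝ) :
    frobNormSq (c • M) = c ^ 2 * frobNormSq M := by
  simp only [frobNormSq_eq, frob_expand, Matrix.smul_apply, smul_eq_mul, Finset.mul_sum]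
  exact Finset.sum_congr rfl fun i _ => Finset.sum_congr rfl fun j _ => by ring

lemma psd_smul {n : ℕ} (M : Matrix (Fin n) (Fin n) ℝ) (hM : M.PosSemidef)
    {c : ℝ} (hc : 0 ≤ c) : (c • M).PosSemidef := by
  constructor
  · show _ = _
    rw [Matrix.conjTranspose_smul, hM.1.eq]
    simp
  · intro x
    have := hM.2 x
    simpa [Matrix.smul_mulVec, dotProduct_smul, Finsupp.mul_sum, mul_assoc, mul_left_comm] using mul_nonneg hc this

lemma proj_inner_le {p c : ℝ} (hp : 0 ≤ p)
    (hq : ∀ t : ℝ, 0 ≤ t → p - 2*c ≤ t^2*p - 2*t*c) : c ≤ p := by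
  by_cases hc : c ≤ 0
  · linarith
  push_neg at hc
  rcases hp.eq_or_lt with h0 | hp'
  · have := hq 2 (by norm_num); nlinarith
  · have h := hq (c/p) (le_of_lt (div_pos hc hp'))
    have h2 := mul_le_mul_of_nonneg_right h hp'.le
    have e : ((c/p)^2*p - 2*(c/p)*c) * p = -c^2 := by
      field_simp; ring
    nlinarith [sq_nonneg (p - c)]

lemma Cmat_isSymm {n m : ℕ} {A : Matrix (Fin n) (Fin n) ℝ} (hA : A.IsSymm)
    {B : Fin m → Matrix (Fin n) (Fin n) ℝ} (hB : ∀ i, (B i).IsSymm) (u : Fin m → ℝ) :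
    (Cmat A B u).IsSymm := by
  unfold Matrix.IsSymm Cmat
  rw [Matrix.transpose_sub, Matrix.transpose_neg, Matrix.transpose_sum]
  simp only [Matrix.transpose_smul]
  rw [hA.eq]
  congr 1
  exact Finset.sum_congr rfl fun i _ => by rw [(hB i).eq]

lemma frobInner_Cmat {n m : ℕ} (A : Matrix (Fin n) (Fin n) ℝ)
    (B : Fin m → Matrix (Fin n) (Fin n) ℝ) (u : Fin m → ℝ)
    (X : Matrix (Fin n) (Fin n) ℝ) :
    frobInner (Cmat A B u) X = -frobInner A X - ∑ i, u i * frobInner (B i) X := by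
  simp [Cmat, frobInner, Matrix.transpose_sub, Matrix.transpose_neg, Matrix.transpose_sum,
    Matrix.transpose_smul, Matrix.sub_mul, Matrix.neg_mul, Matrix.sum_mul, Matrix.smul_mul,
    Matrix.trace_sub, Matrix.trace_neg, Matrix.trace_sum, Matrix.trace_smul, smul_eq_mul]

lemma frobNormSq_le_of_norm_le {n : ℕ} {M N : Matrix (Fin n) (Fin n) ℝ}
    (h : frobNorm M ≤ frobNorm N) : frobNormSq M ≤ frobNormSq N := by
  have hm := frobNormSq_nonneg M
  have hn := frobNormSq_nonneg N
  calc frobNormSq M = (Real.sqrt (frobNormSq M))^2 := (Real.sq_sqrt hm).symm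
    _ ≤ (Real.sqrt (frobNormSq N))^2 := pow_le_pow_left₀ (Real.sqrt_nonneg _) h 2
    _ = frobNormSq N := Real.sq_sqrt hn


/-- Weak duality for the regularized SDP: if `X` is primal feasible and `u` is dual
feasible, then `d_γ(u) ≤ ⟨A, X⟩ + (1/(2γ))‖X‖²_F`. -/
theorem stmt_9 (n m : ℕ) (A : Matrix (Fin n) (Fin n) ℝ) (hA : A.IsSymm)
    (B : Fin m → Matrix (Fin n) (Fin n) ℝ) (hB : ∀ i, (B i).IsSymm)
    (b : Fin m → ℝ) (γ : ℝ) (hγ : 0 < γ)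
    (Ieq Iin : Set (Fin m)) (hunion : Ieq ∪ Iin = Set.univ) (hdisj : Disjoint Ieq Iin)
    (proj : Matrix (Fin n) (Fin n) ℝ → Matrix (Fin n) (Fin n) ℝ)
    (hproj : IsPSDProjection proj)
    (X : Matrix (Fin n) (Fin n) ℝ) (hXpsd : X.PosSemidef)
    (heq : ∀ i ∈ Ieq, frobInner (B i) X = b i)
    (hin : ∀ i ∈ Iin, frobInner (B i) X ≤ b i)
    (u : Fin m → ℝ) (hu : ∀ i ∈ Iin, 0 ≤ u i) :
    dualObj A B b γ proj u ≤ frobInner A X + (1 / (2 * γ)) * frobNormSq X := by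
  obtain ⟨hPpsd, hmin⟩ := hproj (Cmat A B u) (Cmat_isSymm hA hB u)
  set Cu := Cmat A B u with hCu
  set P := proj Cu with hP
  set p := frobNormSq P with hp
  set c := frobInner Cu P with hc
  set x := frobNormSq X with hx
  set t := frobInner Cu X with ht
  have h3 : c ≤ p := by
    apply proj_inner_le (frobNormSq_nonneg P)
    intro s hs
    have h := frobNormSq_le_of_norm_le (hmin (s • P) (psd_smul P hPpsd hs))
    rw [frobNormSq_sub, frobNormSq_sub, frobInner_smul_right, frobNormSq_smul] at h
    linarith
  have h4 : p - 2*c ≤ γ⁻¹^2 * x - 2*γ⁻¹*t := by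
    have h := frobNormSq_le_of_norm_le
      (hmin (γ⁻¹ • X) (psd_smul X hXpsd (inv_nonneg.mpr hγ.le)))
    rw [frobNormSq_sub, frobNormSq_sub, frobInner_smul_right, frobNormSq_smul] at h
    linarith
  have hsum : ∑ i, u i * frobInner (B i) X ≤ ∑ i, u i * b i := by
    apply Finset.sum_le_sum
    intro i _
    have hi : i ∈ Ieq ∪ Iin := by rw [hunion]; trivial
    rcases hi with hi | hi
    · rw [heq i hi]
    · exact mul_le_mul_of_nonneg_left (hin i hi) (hu i hi)
  have hAXb : -t ≤ frobInner A X + ∑ i, u i * b i := by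
    have := frobInner_Cmat A B u X
    rw [← hCu, ← ht] at this
    linarith
  have e1 : γ/2*(γ⁻¹^2*x - 2*γ⁻¹*t) = 1/(2*γ)*x - t := by
    field_simp
  have h6 := mul_le_mul_of_nonneg_left h4 (le_of_lt (half_pos hγ))
  rw [e1] at h6
  have h7 := mul_le_mul_of_nonneg_left h3 hγ.le
  show -(∑ i, u i * b i) - (γ / 2) * p ≤ frobInner A X + 1 / (2 * γ) * x
  nlinarith [h6, h7, hAXb]
end
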